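/- (Lemma 9 of the paper, recurrence for longest matching suffixes.) Let ≈ be an SCER on strings over Σ, f a prefix encoding with respect to ≈, D a dictionary, and T a text. For 0 ≤ i ≤ |T|, let L(i) be the largest length s ≥ 0 such that f(T[i−s+1:i]) ∈ Pref(f(D)), and let V(i) = f(T[i−L(i)+1:i]) be the corresponding state. Then for every 1 ≤ i ≤ |T| with L(i) ≥ 1, there exists q ≥ 0 such that Fail^q(V(i−1)) = f(T[i−L(i)+1:i−1]); that is, the parent of the longest-suffix state at position i occurs in the failure chain of the longest-suffix state at position i−1. -/
import Mathlib


/-- The substring `X[i:j]` (1-indexed, inclusive; `ε` when `j < i`). -/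
def seg {σ : Type*} (X : List σ) (i j : ℕ) : List σ := (X.take j).drop (i - 1)

/-- `Pref(f(D))`: the set of all prefixes (including `ε`) of the encoded
patterns; these are the states of the SCER automaton of `D`. -/
def PrefSet {σ π : Type*} (f : List σ → List π) (D : Finset (List σ)) :
    Set (List π) :=
  {S | ∃ P ∈ D, S <+: f P}

/-- The index `i = min {l | 1 < l ≤ j + 1, f(P[l:j]) ∈ Pref(f(D))}` used in the
definition of the failure function. -/
noncomputable def failIdx {σ π : Type*} (f : List σ → List π)
    (D : Finset (List σ)) (P : List σ) (j : ℕ) : ℕ :=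
  sInf {l | 1 < l ∧ l ≤ j + 1 ∧ f (seg P l j) ∈ PrefSet f D}

/-- `L(i)`: the largest length `s ≥ 0` of a suffix `T[i-s+1:i]` of `T[:i]`
whose encoding lies in `Pref(f(D))`. -/
noncomputable def Llen {σ π : Type*} (f : List σ → List π)
    (D : Finset (List σ)) (T : List σ) (i : ℕ) : ℕ :=
  sSup {s | s ≤ i ∧ f (seg T (i - s + 1) i) ∈ PrefSet f D}

/-- `V(i) = f(T[i-L(i)+1:i])`: the state corresponding to the longest suffix of
`T[:i]` whose encoding is in `Pref(f(D))`. -/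
noncomputable def Vstate {σ π : Type*} (f : List σ → List π)
    (D : Finset (List σ)) (T : List σ) (i : ℕ) : List π :=
  f (seg T (i - Llen f D T i + 1) i)

theorem seg_seg' {σ : Type*} (X : List σ) (a b l j : ℕ) (ha : 1 ≤ a) (hl : 1 ≤ l)
    (hj : a - 1 + j ≤ b) :
    seg (seg X a b) l j = seg X (a + l - 1) (a - 1 + j) := by
  simp only [seg, List.take_drop, List.take_take, List.drop_drop]
  congr 1
  · omega
  · congr 1; omega

theorem seg_take' {σ : Type*} (X : List σ) (a b k : ℕ) (hk : a - 1 + k ≤ b) :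
    (seg X a b).take k = seg X a (a - 1 + k) := by
  simp only [seg, List.take_drop, List.take_take]
  congr 2; omega

theorem seg_nil' {σ : Type*} (X : List σ) (b : ℕ) : seg X (b+1) b = [] := by
  simp [seg]

theorem seg_length' {σ : Type*} (X : List σ) (a b : ℕ) :
    (seg X a b).length = min b X.length - (a - 1) := by
  simp [seg]

/-- Lemma 9 (recurrence for longest matching suffixes).  Let `R` be an SCER,
`f` a prefix encoding w.r.t. `R`, `D` a dictionary, `T` a text, and `Fail` the
failure function of the SCER automaton, extended by `Fail ε = ε`.  For every
`1 ≤ i ≤ |T|` with `L(i) ≥ 1`, there exists `q ≥ 0` such that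
`Fail^q(V(i-1)) = f(T[i-L(i)+1:i-1])`; that is, the parent of the
longest-suffix state at position `i` occurs in the failure chain of the
longest-suffix state at position `i-1`. -/
theorem longest_suffix_recurrence {σ π : Type*} (R : List σ → List σ → Prop)
    (hequiv : Equivalence R)
    (hlen : ∀ X Y, R X Y → X.length = Y.length)
    (hsub : ∀ X Y, R X Y → ∀ i j, 1 ≤ i → i ≤ j → j ≤ X.length →
      R (seg X i j) (seg Y i j))
    (f : List σ → List π)
    (hf1 : ∀ X, (f X).length = X.length)
    (hf2 : ∀ (X : List σ) (i : ℕ), 1 ≤ i → i ≤ X.length →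
      f (X.take i) = (f X).take i)
    (hf3 : ∀ X Y, f X = f Y ↔ R X Y)
    (D : Finset (List σ))
    (Fail : List π → List π)
    (hFail : ∀ P ∈ D, ∀ j : ℕ, 1 ≤ j → j ≤ P.length →
      Fail ((f P).take j) = f (seg P (failIdx f D P j) j))
    (hFailNil : Fail [] = [])
    (T : List σ) (i : ℕ) (hi : 1 ≤ i) (hiT : i ≤ T.length)
    (hL : 1 ≤ Llen f D T i) :
    ∃ q : ℕ, Fail^[q] (Vstate f D T (i - 1)) =
      f (seg T (i - Llen f D T i + 1) (i - 1)) := by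
  classical
  have hfnil : f ([] : List σ) = [] := List.length_eq_zero_iff.mp (by simpa using hf1 [])
  set L := Llen f D T i with hLdef
  set L' := Llen f D T (i - 1) with hL'def
  -- L is attained
  have hLsup : L = sSup {s | s ≤ i ∧ f (seg T (i - s + 1) i) ∈ PrefSet f D} := rfl
  have hbdd : BddAbove {s | s ≤ i ∧ f (seg T (i - s + 1) i) ∈ PrefSet f D} :=
    ⟨i, fun s hs => hs.1⟩
  have hne : {s | s ≤ i ∧ f (seg T (i - s + 1) i) ∈ PrefSet f D}.Nonempty := by
    by_contra h
    rw [Set.not_nonempty_iff_eq_empty] at h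
    rw [hLsup, h] at hL
    simp at hL
  have hLmem : L ∈ {s | s ≤ i ∧ f (seg T (i - s + 1) i) ∈ PrefSet f D} := by
    rw [hLsup]; exact Nat.sSup_mem hne hbdd
  obtain ⟨hLi, hLpref⟩ := hLmem
  obtain ⟨P0, hP0, hpre0⟩ := hLpref
  have heps : ([] : List π) ∈ PrefSet f D := ⟨P0, hP0, List.nil_prefix⟩
  -- parent is in PrefSet
  have hsegL : (seg T (i - L + 1) i).length = L := by
    rw [seg_length']; omega
  have hParent : f (seg T (i - L + 1) (i - 1)) ∈ PrefSet f D := by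
    have hseg : seg T (i - L + 1) (i - 1) = (seg T (i - L + 1) i).take (L - 1) := by
      rw [seg_take' T (i - L + 1) i (L - 1) (by omega)]
      congr 1; omega
    rcases Nat.lt_or_ge L 2 with h2 | h2
    · have hL1 : L = 1 := by omega
      rw [hseg, hL1]
      simp only [Nat.sub_self, List.take_zero, hfnil]
      exact heps
    · rw [hseg, hf2 _ (L - 1) (by omega) (by omega)]
      exact ⟨P0, hP0, (List.take_prefix _ _).trans hpre0⟩
  -- L' facts
  have hL'sup : L' = sSup {s | s ≤ i - 1 ∧ f (seg T (i - 1 - s + 1) (i - 1)) ∈ PrefSet f D} := rfl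
  have hbdd' : BddAbove {s | s ≤ i - 1 ∧ f (seg T (i - 1 - s + 1) (i - 1)) ∈ PrefSet f D} :=
    ⟨i - 1, fun s hs => hs.1⟩
  have hnilSeg : seg T i (i - 1) = [] := by
    have : i = (i - 1) + 1 := by omega
    rw [this]; exact seg_nil' T (i - 1)
  have hne' : {s | s ≤ i - 1 ∧ f (seg T (i - 1 - s + 1) (i - 1)) ∈ PrefSet f D}.Nonempty := by
    refine ⟨0, Nat.zero_le _, ?_⟩
    have : i - 1 - 0 + 1 = i := by omega
    rw [this, hnilSeg, hfnil]; exact heps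
  have hL'mem : L' ∈ {s | s ≤ i - 1 ∧ f (seg T (i - 1 - s + 1) (i - 1)) ∈ PrefSet f D} := by
    rw [hL'sup]; exact Nat.sSup_mem hne' hbdd'
  obtain ⟨hL'le, hL'pref⟩ := hL'mem
  have hmax : ∀ s, s ≤ i - 1 → f (seg T (i - s) (i - 1)) ∈ PrefSet f D → s ≤ L' := by
    intro s hs hm
    rw [hL'sup]
    refine le_csSup hbdd' ⟨hs, ?_⟩
    have : i - 1 - s + 1 = i - s := by omega
    rw [this]; exact hm
  have hL1L' : L - 1 ≤ L' := by
    refine hmax (L - 1) (by omega) ?_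
    have : i - (L - 1) = i - L + 1 := by omega
    rw [this]; exact hParent
  -- main descent
  have key : ∀ s, s ≤ i - 1 → L - 1 ≤ s →
      f (seg T (i - s) (i - 1)) ∈ PrefSet f D →
      (∃ q, Fail^[q] (Vstate f D T (i - 1)) = f (seg T (i - s) (i - 1))) →
      ∃ q, Fail^[q] (Vstate f D T (i - 1)) = f (seg T (i - L + 1) (i - 1)) := by
    intro s
    induction s using Nat.strong_induction_on with
    | _ s IH =>
      intro hsle hsge hmem hreach
      rcases eq_or_lt_of_le hsge with heq | hlt
      · have hidx : i - s = i - L + 1 := by omega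
        rw [hidx] at hreach; exact hreach
      · have hLs : L ≤ s := by omega
        have hs1 : 1 ≤ s := by omega
        obtain ⟨P, hPD, hpre⟩ := hmem
        have hlenseg : (seg T (i - s) (i - 1)).length = s := by
          rw [seg_length']; omega
        have hlenS : (f (seg T (i - s) (i - 1))).length = s := by
          rw [hf1]; exact hlenseg
        have hjP : s ≤ P.length := by
          have h := hpre.length_le; rw [hlenS, hf1] at h; exact h
        have hS : f (seg T (i - s) (i - 1)) = (f P).take s := by
          rw [List.prefix_iff_eq_take] at hpre
          rw [hpre, hlenS]
        have htake : f (P.take s) = (f P).take s := hf2 P s hs1 hjP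
        have hR : R (seg T (i - s) (i - 1)) (P.take s) :=
          (hf3 _ _).mp (hS.trans htake.symm)
        have hsegEq : ∀ l, 1 ≤ l → l ≤ s + 1 →
            f (seg P l s) = f (seg T (i - s + l - 1) (i - 1)) := by
          intro l hl1 hl2
          rcases eq_or_lt_of_le hl2 with h | h
          · rw [h, seg_nil', hfnil]
            have : i - s + (s + 1) - 1 = (i - 1) + 1 := by omega
            rw [this, seg_nil', hfnil]
          · have hls : l ≤ s := by omega
            have h1 := hsub _ _ hR l s hl1 hls (by rw [hlenseg])
            have e1 : seg (seg T (i - s) (i - 1)) l s = seg T (i - s + l - 1) (i - 1) := by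
              rw [seg_seg' T (i - s) (i - 1) l s (by omega) hl1 (by omega)]
              congr 1; omega
            have e2 : seg (P.take s) l s = seg P l s := by
              simp [seg, List.take_take]
            rw [e1, e2] at h1
            exact ((hf3 _ _).mpr h1).symm
        set m := failIdx f D P s with hmdef
        have hnem : {l | 1 < l ∧ l ≤ s + 1 ∧ f (seg P l s) ∈ PrefSet f D}.Nonempty := by
          refine ⟨s + 1, by omega, le_refl _, ?_⟩
          rw [seg_nil', hfnil]; exact heps
        have hmmem : m ∈ {l | 1 < l ∧ l ≤ s + 1 ∧ f (seg P l s) ∈ PrefSet f D} :=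
          Nat.sInf_mem hnem
        obtain ⟨hm1, hm2, hm3⟩ := hmmem
        have hmle : m ≤ s - L + 2 := by
          refine Nat.sInf_le ⟨by omega, by omega, ?_⟩
          rw [hsegEq _ (by omega) (by omega)]
          have : i - s + (s - L + 2) - 1 = i - L + 1 := by omega
          rw [this]; exact hParent
        obtain ⟨q, hq⟩ := hreach
        have hidx2 : i - s + m - 1 = i - (s + 1 - m) := by omega
        have hstep : Fail^[q + 1] (Vstate f D T (i - 1)) =
            f (seg T (i - (s + 1 - m)) (i - 1)) := by
          rw [Function.iterate_succ_apply', hq, hS, hFail P hPD s hs1 hjP, ← hmdef,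
              hsegEq m (by omega) hm2, hidx2]
        have hmem' : f (seg T (i - (s + 1 - m)) (i - 1)) ∈ PrefSet f D := by
          rw [hsegEq m (by omega) hm2, hidx2] at hm3
          exact hm3
        exact IH (s + 1 - m) (by omega) (by omega) (by omega) hmem' ⟨q + 1, hstep⟩
  -- start the chain at L'
  have hidxV : i - 1 - L' + 1 = i - L' := by omega
  have hmemL' : f (seg T (i - L') (i - 1)) ∈ PrefSet f D := by
    rw [← hidxV]; exact hL'pref
  have hstart : ∃ q, Fail^[q] (Vstate f D T (i - 1)) = f (seg T (i - L') (i - 1)) := by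
    refine ⟨0, ?_⟩
    rw [Function.iterate_zero_apply, Vstate, ← hL'def, hidxV]
  exact key L' hL'le hL1L' hmemL' hstart
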